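/- Let n ≥ 3 be an integer and let k ≥ 1 be an integer. If h₁ and h₂ both satisfy hypotheses (H), h₁(r) ≤ h₂(r) for all r ∈ [0,R], and h₁(0) = h₂(0), then σ_(k)(g_{h₁}) ≤ σ_(k)(g_{h₂}). -/

import Mathlib

open MeasureTheory Set

/-- Hypotheses (H): `h` is smooth on `[0,R]`, positive on `[0,R)`, `h(R)=0`,
`h'(R) = -1`, and all even-order derivatives of `h` vanish at `R`. -/
def SatisfiesH (R : ℝ) (h : ℝ → ℝ) : Prop :=
  ContDiffOn ℝ (⊤ : ℕ∞) h (Set.Icc 0 R) ∧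
  (∀ r ∈ Set.Ico (0:ℝ) R, 0 < h r) ∧
  h R = 0 ∧
  derivWithin h (Set.Icc 0 R) R = -1 ∧
  ∀ k : ℕ, iteratedDerivWithin (2 * k) h (Set.Icc 0 R) R = 0

/-- The `k`-th distinct eigenvalue `λ_(k) = k (n + k - 2)` of the Laplacian on the
round unit sphere `S^{n-1}`. -/
noncomputable def sphereEig (n k : ℕ) : ℝ := (k : ℝ) * ((n : ℝ) + (k : ℝ) - 2)

/-- The Rayleigh quotient
`R_λ(a; h) = (∫₀^R ((a')² h^{n-1} + λ a² h^{n-3}))/(a(0)² h(0)^{n-1})`. -/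
noncomputable def rayleighQ (R : ℝ) (n : ℕ) (lam : ℝ) (h a : ℝ → ℝ) : ℝ :=
  (∫ r in (0:ℝ)..R,
      (deriv a r) ^ 2 * h r ^ ((n : ℤ) - 1) + lam * (a r) ^ 2 * h r ^ ((n : ℤ) - 3)) /
    ((a 0) ^ 2 * h 0 ^ ((n : ℤ) - 1))

/-- Admissible test functions: Lipschitz on `[0,R]`, vanishing at `R`, nonzero at `0`. -/
def IsAdmissible (R : ℝ) (a : ℝ → ℝ) : Prop :=
  (∃ K : NNReal, LipschitzOnWith K a (Set.Icc 0 R)) ∧ a R = 0 ∧ a 0 ≠ 0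

/-- The `k`-th distinct Steklov eigenvalue of the ball `[0,R] × S^{n-1}` with the
revolution metric `g_h`, characterized variationally. -/
noncomputable def steklov (R : ℝ) (n k : ℕ) (h : ℝ → ℝ) : ℝ :=
  sInf { v : ℝ | ∃ a : ℝ → ℝ, IsAdmissible R a ∧ v = rayleighQ R n (sphereEig n k) h a }

/-- `a` is a minimizer realizing `σ_(k)(g_h)`. -/
def IsMinimizer (R : ℝ) (n k : ℕ) (h a : ℝ → ℝ) : Prop :=
  IsAdmissible R a ∧ rayleighQ R n (sphereEig n k) h a = steklov R n k h

lemma integrable_aux (R : ℝ) (hR : 0 < R) (p q : ℕ) (lam : ℝ) (hlam : 0 ≤ lam)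
    (h a : ℝ → ℝ) (hc : ContinuousOn h (Set.Icc 0 R))
    (K : NNReal) (hK : LipschitzOnWith K a (Set.Icc 0 R)) (haR : a R = 0) :
    IntervalIntegrable
      (fun r => (deriv a r) ^ 2 * h r ^ p + lam * (a r) ^ 2 * h r ^ q) volume 0 R := by
  rw [intervalIntegrable_iff_integrableOn_Ioc_of_le hR.le]
  obtain ⟨C, hC⟩ := isCompact_Icc.exists_bound_of_continuousOn hc
  have hmeas : AEStronglyMeasurable
      (fun r => (deriv a r) ^ 2 * h r ^ p + lam * (a r) ^ 2 * h r ^ q)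
      (volume.restrict (Set.Ioc 0 R)) := by
    have hderiv : AEStronglyMeasurable (deriv a) (volume.restrict (Set.Ioc 0 R)) :=
      (measurable_deriv a).aestronglyMeasurable
    have hh : AEStronglyMeasurable h (volume.restrict (Set.Ioc 0 R)) :=
      (hc.mono Set.Ioc_subset_Icc_self).aestronglyMeasurable measurableSet_Ioc
    have ha : AEStronglyMeasurable a (volume.restrict (Set.Ioc 0 R)) :=
      (hK.continuousOn.mono Set.Ioc_subset_Icc_self).aestronglyMeasurable measurableSet_Ioc
    exact ((hderiv.pow 2).mul (hh.pow p)).add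
      ((aestronglyMeasurable_const.mul (ha.pow 2)).mul (hh.pow q))
  refine Integrable.mono' (integrable_const ((K:ℝ)^2 * C^p + lam * ((K:ℝ)*R)^2 * C^q))
    hmeas ?_
  have hne : ∀ᵐ r ∂(volume.restrict (Set.Ioc 0 R)), r ≠ R := by
    refine (ae_iff).2 ?_
    have : {x : ℝ | ¬ x ≠ R} = {R} := by ext x; simp
    rw [this, Measure.restrict_apply (measurableSet_singleton R)]
    exact le_antisymm ((measure_mono Set.inter_subset_left).trans_eq
      (Real.volume_singleton)) zero_le
  filter_upwards [ae_restrict_mem measurableSet_Ioc, hne] with r hr hrne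
  have hrIoo : r ∈ Set.Ioo 0 R := ⟨hr.1, lt_of_le_of_ne hr.2 hrne⟩
  have hrIcc : r ∈ Set.Icc 0 R := ⟨hr.1.le, hr.2⟩
  have h1 : |deriv a r| ≤ (K : ℝ) := by
    have : Set.Icc (0:ℝ) R ∈ nhds r := Icc_mem_nhds hrIoo.1 hrIoo.2
    simpa using norm_deriv_le_of_lipschitzOn this hK
  have h2 : |h r| ≤ C := by simpa using hC r hrIcc
  have h3 : |a r| ≤ (K : ℝ) * R := by
    have := hK.dist_le_mul r hrIcc R ⟨hR.le, le_refl R⟩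
    rw [haR] at this
    have hd : dist r R ≤ R := by
      rw [Real.dist_eq]; rw [abs_sub_le_iff]; constructor <;> [linarith [hrIcc.1, hrIcc.2]; linarith [hrIcc.1, hrIcc.2]]
    calc |a r| = dist (a r) 0 := by simp [Real.dist_eq]
      _ ≤ (K:ℝ) * dist r R := this
      _ ≤ (K:ℝ) * R := by exact mul_le_mul_of_nonneg_left hd K.coe_nonneg
  have hC0 : 0 ≤ C := le_trans (abs_nonneg _) h2
  have e1 : |(deriv a r) ^ 2 * h r ^ p| ≤ (K:ℝ)^2 * C^p := by
    rw [abs_mul, abs_pow, abs_pow]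
    exact mul_le_mul (pow_le_pow_left₀ (abs_nonneg _) h1 2)
      (pow_le_pow_left₀ (abs_nonneg _) h2 p) (pow_nonneg (abs_nonneg _) _)
      (pow_nonneg K.coe_nonneg _)
  have e2 : |lam * (a r) ^ 2 * h r ^ q| ≤ lam * ((K:ℝ)*R)^2 * C^q := by
    rw [abs_mul, abs_mul, abs_pow, abs_pow, abs_of_nonneg hlam]
    exact mul_le_mul (mul_le_mul_of_nonneg_left
        (pow_le_pow_left₀ (abs_nonneg _) h3 2) hlam)
      (pow_le_pow_left₀ (abs_nonneg _) h2 q) (pow_nonneg (abs_nonneg _) _)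
      (by positivity)
  calc ‖(deriv a r) ^ 2 * h r ^ p + lam * (a r) ^ 2 * h r ^ q‖
      ≤ |(deriv a r) ^ 2 * h r ^ p| + |lam * (a r) ^ 2 * h r ^ q| := abs_add_le _ _
    _ ≤ (K:ℝ)^2 * C^p + lam * ((K:ℝ)*R)^2 * C^q := add_le_add e1 e2

theorem stmt_10 (n : ℕ) (hn : 3 ≤ n) (R : ℝ) (hR : 0 < R) (k : ℕ) (hk : 1 ≤ k)
    (h₁ h₂ : ℝ → ℝ) (hH1 : SatisfiesH R h₁) (hH2 : SatisfiesH R h₂)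
    (hle : ∀ r ∈ Set.Icc (0:ℝ) R, h₁ r ≤ h₂ r) (h0 : h₁ 0 = h₂ 0) :
    steklov R n k h₁ ≤ steklov R n k h₂ := by
  obtain ⟨m, rfl⟩ : ∃ m, n = m + 3 := ⟨n - 3, by omega⟩
  set lam := sphereEig (m + 3) k with hlamdef
  have hlam : 0 ≤ lam := by
    have h1 : (1:ℝ) ≤ (k:ℝ) := by exact_mod_cast hk
    have : (0:ℝ) ≤ ((m:ℝ) + 3) + (k:ℝ) - 2 := by linarith
    simp only [hlamdef, sphereEig]
    push_cast
    nlinarith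
  -- nonneg of h on Icc
  have hnonneg : ∀ (h : ℝ → ℝ), SatisfiesH R h → ∀ r ∈ Set.Icc (0:ℝ) R, 0 ≤ h r := by
    intro h hH r hr
    rcases lt_or_eq_of_le hr.2 with hlt | heq
    · exact (hH.2.1 r ⟨hr.1, hlt⟩).le
    · rw [heq, hH.2.2.1]
  -- zpow to pow rewriting
  have hz1 : ∀ x : ℝ, x ^ (((m + 3 : ℕ) : ℤ) - 1) = x ^ (m + 2) := by
    intro x
    rw [show (((m + 3 : ℕ) : ℤ) - 1) = ((m + 2 : ℕ) : ℤ) by push_cast; ring, zpow_natCast]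
  have hz3 : ∀ x : ℝ, x ^ (((m + 3 : ℕ) : ℤ) - 3) = x ^ m := by
    intro x
    rw [show (((m + 3 : ℕ) : ℤ) - 3) = ((m : ℕ) : ℤ) by push_cast; ring, zpow_natCast]
  -- every element of the h₁-set is nonnegative
  have hbdd : BddBelow { v : ℝ | ∃ a : ℝ → ℝ, IsAdmissible R a ∧
      v = rayleighQ R (m + 3) lam h₁ a } := by
    refine ⟨0, fun v hv => ?_⟩
    obtain ⟨a, _, rfl⟩ := hv
    unfold rayleighQ
    apply div_nonneg
    · apply intervalIntegral.integral_nonneg hR.le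
      intro u hu
      have h1 : 0 ≤ h₁ u := hnonneg h₁ hH1 u hu
      have := zpow_nonneg h1 (((m + 3 : ℕ) : ℤ) - 1)
      have := zpow_nonneg h1 (((m + 3 : ℕ) : ℤ) - 3)
      positivity
    · have := zpow_nonneg (hnonneg h₁ hH1 0 ⟨le_refl 0, hR.le⟩) (((m + 3 : ℕ) : ℤ) - 1)
      positivity
  -- the key pointwise inequality on Rayleigh quotients
  have key : ∀ a : ℝ → ℝ, IsAdmissible R a →
      rayleighQ R (m + 3) lam h₁ a ≤ rayleighQ R (m + 3) lam h₂ a := by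
    intro a ⟨⟨K, hK⟩, haR, ha0⟩
    unfold rayleighQ
    rw [h0]
    have hden : 0 < (a 0) ^ 2 * h₂ 0 ^ (((m + 3 : ℕ) : ℤ) - 1) := by
      have hpos : 0 < h₂ 0 := hH2.2.1 0 ⟨le_refl 0, hR⟩
      have := zpow_pos hpos (((m + 3 : ℕ) : ℤ) - 1)
      positivity
    rw [div_le_div_iff_of_pos_right hden]
    simp only [hz1, hz3]
    have int1 := integrable_aux R hR (m + 2) m lam hlam h₁ a hH1.1.continuousOn K hK haR
    have int2 := integrable_aux R hR (m + 2) m lam hlam h₂ a hH2.1.continuousOn K hK haR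
    apply intervalIntegral.integral_mono_on hR.le int1 int2
    intro x hx
    have h1 : 0 ≤ h₁ x := hnonneg h₁ hH1 x hx
    have h2 : h₁ x ≤ h₂ x := hle x hx
    have e1 : h₁ x ^ (m + 2) ≤ h₂ x ^ (m + 2) := pow_le_pow_left₀ h1 h2 _
    have e2 : h₁ x ^ m ≤ h₂ x ^ m := pow_le_pow_left₀ h1 h2 _
    have t1 : (deriv a x) ^ 2 * h₁ x ^ (m + 2) ≤ (deriv a x) ^ 2 * h₂ x ^ (m + 2) :=
      mul_le_mul_of_nonneg_left e1 (sq_nonneg _)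
    have t2 : lam * (a x) ^ 2 * h₁ x ^ m ≤ lam * (a x) ^ 2 * h₂ x ^ m :=
      mul_le_mul_of_nonneg_left e2 (by positivity)
    exact add_le_add t1 t2
  -- nonemptiness of the h₂-set
  have hne : { v : ℝ | ∃ a : ℝ → ℝ, IsAdmissible R a ∧
      v = rayleighQ R (m + 3) lam h₂ a }.Nonempty := by
    refine ⟨rayleighQ R (m + 3) lam h₂ (fun r => R - r), fun r => R - r, ⟨⟨1, ?_⟩, ?_, ?_⟩, rfl⟩
    · have hl : LipschitzWith 1 (fun r => R - r) := by
        simpa using (LipschitzWith.const R).sub LipschitzWith.id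
      exact hl.lipschitzOnWith
    · simp
    · simpa using hR.ne'
  unfold steklov
  refine le_csInf hne ?_
  rintro v ⟨a, hadm, rfl⟩
  exact le_trans (csInf_le hbdd ⟨a, hadm, rfl⟩) (key a hadm)
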